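/- Let Γ ⊂ ℝⁿ be a separated set, and let N ≥ n + 1 be a real number. Then there exists a constant C, depending only on N, n, and Γ, such that for all integers η ≤ j and all x ∈ ℝⁿ: ∑_{γ∈Γ} 2^{−jn} (1 + 2^η |x − 2^{−j}γ|)^{−N} ≤ C · 2^{−ηn}. -/

import Mathlib

open MeasureTheory
open scoped ENNReal

/-- Lemma 6.5 of Führ–Mayeli, Euclidean case: for a separated set `Γ ⊂ ℝⁿ` and
`N ≥ n + 1`, there is a constant `C` (depending only on `N`, `n`, `Γ`) such that for all
integers `η ≤ j` and all `x ∈ ℝⁿ`: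
`∑_{γ∈Γ} 2^{−jn} (1 + 2^η |x − 2^{−j}γ|)^{−N} ≤ C · 2^{−ηn}`. -/
theorem separated_sum_decay (n : ℕ) (Γ : Set (EuclideanSpace ℝ (Fin n)))
    (hsep : ∃ W : Set (EuclideanSpace ℝ (Fin n)), IsOpen W ∧
      (0 : EuclideanSpace ℝ (Fin n)) ∈ W ∧ Bornology.IsBounded W ∧
      Γ.Pairwise fun γ γ' => Disjoint ((γ + ·) '' W) ((γ' + ·) '' W))
    (N : ℝ) (hN : (n : ℝ) + 1 ≤ N) :
    ∃ C : ℝ, 0 ≤ C ∧ ∀ η j : ℤ, η ≤ j → ∀ x : EuclideanSpace ℝ (Fin n),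
      (∑' γ : Γ, ENNReal.ofReal ((2 : ℝ) ^ (-((j : ℝ) * n)) *
          (1 + (2 : ℝ) ^ ((η : ℝ)) *
            ‖x - (2 : ℝ) ^ (-(j : ℝ)) • (γ : EuclideanSpace ℝ (Fin n))‖) ^ (-N))) ≤
        ENNReal.ofReal (C * (2 : ℝ) ^ (-((η : ℝ) * n))) := by
  obtain ⟨W, hWopen, hW0, hWbdd, hWdisj⟩ := hsep
  obtain ⟨ε, hε, hballW⟩ := Metric.isOpen_iff.1 hWopen 0 hW0
  have hN0 : (0:ℝ) < N := by have : (0:ℝ) ≤ n := Nat.cast_nonneg n; linarith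
  -- separation of the points of Γ
  have hsepd : ∀ γ ∈ Γ, ∀ γ' ∈ Γ, γ ≠ γ' → 2 * ε ≤ ‖γ - γ'‖ := by
    intro γ hγ γ' hγ' hne
    by_contra hlt
    push_neg at hlt
    have hmem1 : γ + (2⁻¹ : ℝ) • (γ' - γ) ∈ (γ + ·) '' W := by
      refine ⟨(2⁻¹ : ℝ) • (γ' - γ), hballW ?_, rfl⟩
      simp only [Metric.mem_ball, dist_zero_right, norm_smul, Real.norm_eq_abs]
      rw [norm_sub_rev, abs_of_pos (by norm_num : (0:ℝ) < 2⁻¹)]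
      linarith
    have hmem2 : γ + (2⁻¹ : ℝ) • (γ' - γ) ∈ (γ' + ·) '' W := by
      refine ⟨(2⁻¹ : ℝ) • (γ - γ'), hballW ?_, ?_⟩
      · simp only [Metric.mem_ball, dist_zero_right, norm_smul, Real.norm_eq_abs]
        rw [abs_of_pos (by norm_num : (0:ℝ) < 2⁻¹)]
        linarith
      · show γ' + (2⁻¹:ℝ) • (γ - γ') = γ + (2⁻¹:ℝ) • (γ' - γ)
        module
    exact Set.not_disjoint_iff.2 ⟨_, hmem1, hmem2⟩ (hWdisj hγ hγ' hne)
  -- Γ is countable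
  have hcnt : Γ.Countable :=
    Set.PairwiseDisjoint.countable_of_isOpen hWdisj
      (fun γ _ => (isOpenMap_add_left γ) W hWopen)
      (fun γ _ => ⟨γ, 0, hW0, add_zero γ⟩)
  haveI : Countable Γ := hcnt.to_subtype
  -- the integrand
  set f : EuclideanSpace ℝ (Fin n) → ℝ≥0∞ := fun z => ENNReal.ofReal ((1 + ‖z‖) ^ (-N)) with hf
  have hfm : Measurable f := by fun_prop
  have hint : Integrable (fun z : EuclideanSpace ℝ (Fin n) => (1 + ‖z‖) ^ (-N)) := by
    apply integrable_one_add_norm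
    rw [finrank_euclideanSpace_fin]; linarith
  set J := ∫⁻ z, f z with hJ
  have hJtop : J ≠ ∞ := hint.lintegral_lt_top.ne
  -- volume of balls
  set v := volume (Metric.ball (0 : EuclideanSpace ℝ (Fin n)) 1) with hv
  have hv0 : v ≠ 0 := (Metric.measure_ball_pos _ _ one_pos).ne'
  have hvtop : v ≠ ∞ := measure_ball_lt_top.ne
  have hvt : 0 < v.toReal := ENNReal.toReal_pos hv0 hvtop
  have hBvol : ∀ (c : EuclideanSpace ℝ (Fin n)) (r : ℝ), 0 < r →
      volume (Metric.ball c r) = ENNReal.ofReal (r ^ n) * v := by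
    intro c r hr
    rcases Nat.eq_zero_or_pos n with h0 | hpos
    · haveI : Subsingleton (EuclideanSpace ℝ (Fin n)) := by
        subst h0
        exact ⟨fun a b => PiLp.ext fun i => i.elim0⟩
      have hu : ∀ (c : EuclideanSpace ℝ (Fin n)) (r : ℝ), 0 < r →
          Metric.ball c r = Set.univ := by
        intro c r hr
        ext y
        have hyc : y = c := Subsingleton.elim y c
        simp [Metric.mem_ball, hyc, hr]
      rw [hu c r hr, hv, hu 0 1 one_pos, h0, pow_zero, ENNReal.ofReal_one, one_mul]
    · haveI : Nontrivial (EuclideanSpace ℝ (Fin n)) :=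
        Module.nontrivial_of_finrank_pos (R := ℝ) (by rw [finrank_euclideanSpace_fin]; exact hpos)
      rw [hv, Measure.addHaar_ball volume c hr.le, finrank_euclideanSpace_fin]
  -- the constant
  refine ⟨(1 + ε) ^ N * J.toReal / (ε ^ n * v.toReal), by positivity, ?_⟩
  intro η j hηj x
  have hηj' : ((η:ℝ)) ≤ (j:ℝ) := by exact_mod_cast hηj
  set s : ℝ := (2:ℝ) ^ ((η:ℝ)) * (2:ℝ) ^ (-(j:ℝ)) with hs
  have hs0 : 0 < s := by positivity
  have hs1 : s ≤ 1 := by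
    rw [hs, ← Real.rpow_add two_pos]
    exact Real.rpow_le_one_of_one_le_of_nonpos one_le_two (by linarith)
  set B : Γ → Set (EuclideanSpace ℝ (Fin n)) := fun γ =>
    Metric.ball ((2:ℝ) ^ ((η:ℝ)) • x - s • (γ : EuclideanSpace ℝ (Fin n))) (s * ε) with hB
  have hdisj : Pairwise (Function.onFun Disjoint B) := by
    intro a b hab
    have hne : (a : EuclideanSpace ℝ (Fin n)) ≠ b := fun h => hab (Subtype.ext h)
    have h2ε := hsepd a a.2 b b.2 hne
    refine Metric.ball_disjoint_ball ?_
    have hcd : dist ((2:ℝ)^((η:ℝ)) • x - s • (a : EuclideanSpace ℝ (Fin n)))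
        ((2:ℝ)^((η:ℝ)) • x - s • (b : EuclideanSpace ℝ (Fin n)))
        = s * ‖(a : EuclideanSpace ℝ (Fin n)) - b‖ := by
      rw [dist_eq_norm]
      have h1 : ((2:ℝ)^((η:ℝ)) • x - s • (a : EuclideanSpace ℝ (Fin n))) -
          ((2:ℝ)^((η:ℝ)) • x - s • (b : EuclideanSpace ℝ (Fin n))) =
          s • ((b : EuclideanSpace ℝ (Fin n)) - a) := by module
      rw [h1, norm_smul, Real.norm_eq_abs, abs_of_pos hs0, norm_sub_rev]
    rw [hcd]
    nlinarith
  set K : ℝ≥0∞ := ENNReal.ofReal ((1 + ε) ^ (-N) * ε ^ n * (2:ℝ) ^ ((η:ℝ) * n)) * v with hK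
  have hkey : ∀ γ : Γ,
      ENNReal.ofReal ((2 : ℝ) ^ (-((j : ℝ) * n)) *
          (1 + (2 : ℝ) ^ ((η : ℝ)) *
            ‖x - (2 : ℝ) ^ (-(j : ℝ)) • (γ : EuclideanSpace ℝ (Fin n))‖) ^ (-N)) * K
        ≤ ∫⁻ z in B γ, f z := by
    intro γ
    set d : ℝ := ‖x - (2:ℝ) ^ (-(j:ℝ)) • (γ : EuclideanSpace ℝ (Fin n))‖ with hd
    have hd0 : 0 ≤ d := norm_nonneg _
    have h2η : (0:ℝ) < (2:ℝ) ^ ((η:ℝ)) := by positivity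
    have hcnorm : ‖(2:ℝ) ^ ((η:ℝ)) • x - s • (γ : EuclideanSpace ℝ (Fin n))‖
        = (2:ℝ)^((η:ℝ)) * d := by
      have h1 : (2:ℝ) ^ ((η:ℝ)) • x - s • (γ : EuclideanSpace ℝ (Fin n)) =
          (2:ℝ) ^ ((η:ℝ)) • (x - (2:ℝ) ^ (-(j:ℝ)) • (γ : EuclideanSpace ℝ (Fin n))) := by
        rw [smul_sub, smul_smul, hs]
      rw [h1, norm_smul, Real.norm_eq_abs, abs_of_pos h2η, hd]
    have hpt : ∀ z ∈ B γ,
        ENNReal.ofReal ((1+ε)^(-N) * (1 + (2:ℝ)^((η:ℝ)) * d)^(-N)) ≤ f z := by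
      intro z hz
      apply ENNReal.ofReal_le_ofReal
      have hz' : ‖z - ((2:ℝ) ^ ((η:ℝ)) • x - s • (γ : EuclideanSpace ℝ (Fin n)))‖ < s * ε := by
        rw [← dist_eq_norm]; exact hz
      have h1 : ‖z‖ ≤ (2:ℝ)^((η:ℝ)) * d + s * ε := by
        have h2 : z = ((2:ℝ) ^ ((η:ℝ)) • x - s • (γ : EuclideanSpace ℝ (Fin n))) +
            (z - ((2:ℝ) ^ ((η:ℝ)) • x - s • (γ : EuclideanSpace ℝ (Fin n)))) := by abel
        calc ‖z‖ = ‖((2:ℝ) ^ ((η:ℝ)) • x - s • (γ : EuclideanSpace ℝ (Fin n))) +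
              (z - ((2:ℝ) ^ ((η:ℝ)) • x - s • (γ : EuclideanSpace ℝ (Fin n))))‖ := by rw [← h2]
          _ ≤ ‖(2:ℝ) ^ ((η:ℝ)) • x - s • (γ : EuclideanSpace ℝ (Fin n))‖ +
              ‖z - ((2:ℝ) ^ ((η:ℝ)) • x - s • (γ : EuclideanSpace ℝ (Fin n)))‖ := norm_add_le _ _
          _ ≤ (2:ℝ)^((η:ℝ)) * d + s * ε := by rw [hcnorm]; linarith
      have hbase : 1 + ‖z‖ ≤ (1 + ε) * (1 + (2:ℝ)^((η:ℝ)) * d) := by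
        nlinarith [mul_nonneg h2η.le hd0]
      calc (1+ε)^(-N) * (1 + (2:ℝ)^((η:ℝ)) * d)^(-N)
          = ((1+ε) * (1 + (2:ℝ)^((η:ℝ)) * d))^(-N) :=
            (Real.mul_rpow (by positivity) (by positivity)).symm
        _ ≤ (1 + ‖z‖)^(-N) :=
            Real.rpow_le_rpow_of_nonpos (by positivity) hbase (by linarith)
    have hsn : (s * ε)^n = (2:ℝ)^((η:ℝ) * n) * ((2:ℝ)^(-((j:ℝ) * n)) * ε^n) := by
      rw [hs, mul_pow, mul_pow, ← Real.rpow_natCast ((2:ℝ)^((η:ℝ))) n,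
        ← Real.rpow_natCast ((2:ℝ)^(-(j:ℝ))) n,
        ← Real.rpow_mul (by norm_num : (0:ℝ) ≤ 2),
        ← Real.rpow_mul (by norm_num : (0:ℝ) ≤ 2), neg_mul, mul_assoc]
    calc ENNReal.ofReal ((2 : ℝ) ^ (-((j : ℝ) * n)) *
            (1 + (2:ℝ)^((η:ℝ)) * d) ^ (-N)) * K
        = ENNReal.ofReal ((1+ε)^(-N) * (1 + (2:ℝ)^((η:ℝ)) * d)^(-N)) *
            ENNReal.ofReal ((s*ε)^n) * v := by
          rw [hK, ← mul_assoc, ← ENNReal.ofReal_mul (by positivity),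
            ← ENNReal.ofReal_mul (by positivity)]
          congr 2
          rw [hsn]; ring
      _ = ENNReal.ofReal ((1+ε)^(-N) * (1 + (2:ℝ)^((η:ℝ)) * d)^(-N)) * volume (B γ) := by
          rw [hB]
          rw [hBvol _ _ (by positivity), mul_assoc]
      _ = ∫⁻ _ in B γ, ENNReal.ofReal ((1+ε)^(-N) * (1 + (2:ℝ)^((η:ℝ)) * d)^(-N)) :=
          (setLIntegral_const _ _).symm
      _ ≤ ∫⁻ z in B γ, f z := setLIntegral_mono hfm hpt
  have hk0 : (0:ℝ) < (1 + ε)^(-N) * ε^n * (2:ℝ)^((η:ℝ)*n) := by positivity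
  have hK0 : K ≠ 0 := mul_ne_zero (ENNReal.ofReal_pos.2 hk0).ne' hv0
  have hKtop : K ≠ ∞ := ENNReal.mul_ne_top ENNReal.ofReal_ne_top hvtop
  rw [← ENNReal.mul_le_mul_iff_left hK0 hKtop]
  have hsum : (∑' γ : Γ, ENNReal.ofReal ((2 : ℝ) ^ (-((j : ℝ) * n)) *
      (1 + (2 : ℝ) ^ ((η : ℝ)) *
        ‖x - (2 : ℝ) ^ (-(j : ℝ)) • (γ : EuclideanSpace ℝ (Fin n))‖) ^ (-N))) * K ≤ J :=
    calc (∑' γ : Γ, ENNReal.ofReal ((2 : ℝ) ^ (-((j : ℝ) * n)) *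
          (1 + (2 : ℝ) ^ ((η : ℝ)) *
            ‖x - (2 : ℝ) ^ (-(j : ℝ)) • (γ : EuclideanSpace ℝ (Fin n))‖) ^ (-N))) * K
        = ∑' γ : Γ, (ENNReal.ofReal ((2 : ℝ) ^ (-((j : ℝ) * n)) *
          (1 + (2 : ℝ) ^ ((η : ℝ)) *
            ‖x - (2 : ℝ) ^ (-(j : ℝ)) • (γ : EuclideanSpace ℝ (Fin n))‖) ^ (-N)) * K) :=
          ENNReal.tsum_mul_right.symm
      _ ≤ ∑' γ : Γ, ∫⁻ z in B γ, f z := ENNReal.tsum_le_tsum hkey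
      _ = ∫⁻ z in ⋃ γ, B γ, f z :=
          (lintegral_iUnion (fun γ => measurableSet_ball) hdisj f).symm
      _ ≤ ∫⁻ z, f z := setLIntegral_le_lintegral _ _
      _ = J := hJ.symm
  refine hsum.trans (le_of_eq ?_)
  rw [hK, ← mul_assoc, ← ENNReal.ofReal_mul (by positivity),
    ← ENNReal.ofReal_toReal hvtop, ← ENNReal.ofReal_mul (by positivity),
    ← ENNReal.ofReal_toReal hJtop]
  congr 1
  have h2 : (2:ℝ)^(-((η:ℝ)*n)) * (2:ℝ)^((η:ℝ)*n) = 1 := by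
    rw [← Real.rpow_add two_pos]; simp
  have h3 : (1+ε)^N * (1+ε)^(-N) = 1 := by
    rw [← Real.rpow_add (by positivity : (0:ℝ) < 1 + ε)]; simp
  have hεn : (0:ℝ) < ε ^ n := by positivity
  simp only [ENNReal.toReal_ofReal ENNReal.toReal_nonneg]
  field_simp
  linear_combination (-(J.toReal * ((2:ℝ)^(-((η:ℝ)*(n:ℝ))) * (2:ℝ)^((η:ℝ)*(n:ℝ))))) * h3 -
    (J.toReal) * h2
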